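/- Let V be a finite nonempty set, let π and p be probability distributions on V, let x* be a point attaining the maximum of p, and set q := 1 - p(x*). Then the off-mode mass of π satisfies 1 - π(x*) ≤ sup{ λ ∈ [0,1] : d_kl(λ ‖ q) ≤ D_KL(π ‖ p) }, and moreover q itself belongs to the set { λ ∈ [0,1] : d_kl(λ ‖ q) ≤ D_KL(π ‖ p) } since d_kl(q ‖ q) = 0. -/

import Mathlib

open Real

/-- Termwise KL contribution `p·log(p/q)` with the conventions
`0·log(0/q) = 0`, `0·log(0/0) = 0`, and `b·log(b/0) = +∞` for `b > 0`,
valued in the extended reals `[-∞, ∞]`. -/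
noncomputable def klTerm (p q : ℝ) : EReal :=
  if p = 0 then 0 else if q = 0 then ⊤ else ((p * Real.log (p / q) : ℝ) : EReal)

/-- Binary Kullback–Leibler divergence `d_kl(l ‖ q)` between the two-point
distributions `(l, 1 - l)` and `(q, 1 - q)`. -/
noncomputable def dkl (l q : ℝ) : EReal :=
  klTerm l q + klTerm (1 - l) (1 - q)

/-- Kullback–Leibler divergence `D_KL(μ ‖ p)` between distributions on a finite type. -/
noncomputable def DKL {V : Type*} [Fintype V] (μ p : V → ℝ) : EReal :=
  ∑ x, klTerm (μ x) (p x)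

lemma klTerm_ne_bot (p q : ℝ) : klTerm p q ≠ ⊥ := by
  unfold klTerm; split_ifs
  · simp
  · simp
  · exact EReal.coe_ne_bot _

lemma klTerm_self (x : ℝ) : klTerm x x = 0 := by
  unfold klTerm; split_ifs with h
  · rfl
  · rw [div_self h]; simp

lemma sum_klTerm_ne_bot {ι : Type*} (s : Finset ι) (a b : ι → ℝ) :
    ∑ i ∈ s, klTerm (a i) (b i) ≠ ⊥ := by
  induction s using Finset.cons_induction with
  | empty => simp
  | cons i s hi ih =>
    rw [Finset.sum_cons]
    intro h
    rcases EReal.add_eq_bot_iff.mp h with h' | h'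
    · exact klTerm_ne_bot _ _ h'
    · exact ih h'

lemma ereal_coe_sum {ι : Type*} (s : Finset ι) (f : ι → ℝ) :
    ((∑ i ∈ s, f i : ℝ) : EReal) = ∑ i ∈ s, (f i : EReal) := by
  induction s using Finset.cons_induction with
  | empty => simp
  | cons i s hi ih => rw [Finset.sum_cons, Finset.sum_cons, EReal.coe_add, ih]

lemma real_logsum {ι : Type*} (s : Finset ι) (a b : ι → ℝ)
    (ha : ∀ i ∈ s, 0 ≤ a i) (hb : ∀ i ∈ s, 0 ≤ b i)
    (hab : ∀ i ∈ s, a i ≠ 0 → 0 < b i) (hA : (∑ i ∈ s, a i) ≠ 0) :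
    (∑ i ∈ s, a i) * Real.log ((∑ i ∈ s, a i) / (∑ i ∈ s, b i)) ≤
      ∑ i ∈ s, (if a i = 0 then 0 else a i * Real.log (a i / b i)) := by
  set A := ∑ i ∈ s, a i with hAdef
  set B := ∑ i ∈ s, b i with hBdef
  have hApos : 0 < A := lt_of_le_of_ne (Finset.sum_nonneg ha) (Ne.symm hA)
  obtain ⟨i0, hi0s, hi0⟩ : ∃ i ∈ s, a i ≠ 0 := by
    by_contra h
    push_neg at h
    exact hA (Finset.sum_eq_zero h)
  have hBpos : 0 < B :=
    Finset.sum_pos' hb ⟨i0, hi0s, hab i0 hi0s hi0⟩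
  -- termwise bound
  have key : ∀ i ∈ s, (if a i = 0 then 0 else a i - b i * (A / B)) ≤
      (if a i = 0 then 0 else a i * Real.log (a i / b i)) - a i * Real.log (A / B) := by
    intro i hi
    by_cases h0 : a i = 0
    · simp [h0]
    · simp only [if_neg h0]
      have hai : 0 < a i := lt_of_le_of_ne (ha i hi) (Ne.symm h0)
      have hbi : 0 < b i := hab i hi h0
      have hx : 0 < b i * A / (a i * B) := by positivity
      have hlog := Real.log_le_sub_one_of_pos hx
      have hrw : Real.log (b i * A / (a i * B)) =
          Real.log (A / B) - Real.log (a i / b i) := by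
        rw [Real.log_div (by positivity) (by positivity), Real.log_mul (by positivity) (by positivity),
          Real.log_mul (by positivity) (by positivity), Real.log_div (by positivity) (by positivity),
          Real.log_div (by positivity) (by positivity)]
        ring
      rw [hrw] at hlog
      have := mul_le_mul_of_nonneg_left hlog (le_of_lt hai)
      have hne : a i * (b i * A / (a i * B) - 1) = b i * (A / B) - a i := by
        field_simp
      nlinarith [this, mul_sub (a i) (Real.log (A / B)) (Real.log (a i / b i))]
  have hsum := Finset.sum_le_sum key
  have h1 : ∑ i ∈ s, ((if a i = 0 then 0 else a i * Real.log (a i / b i)) - a i * Real.log (A / B))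
      = (∑ i ∈ s, (if a i = 0 then 0 else a i * Real.log (a i / b i))) - A * Real.log (A / B) := by
    rw [Finset.sum_sub_distrib, ← Finset.sum_mul]
  have h2 : 0 ≤ ∑ i ∈ s, (if a i = 0 then 0 else a i - b i * (A / B)) := by
    have e1' : ∀ i ∈ s, (if a i = 0 then 0 else a i - b i * (A / B)) =
        (if a i = 0 then 0 else a i) - (if a i = 0 then 0 else b i) * (A / B) := by
      intro i hi; split_ifs <;> simp
    have e1 : ∑ i ∈ s, (if a i = 0 then 0 else a i - b i * (A / B))
        = (∑ i ∈ s, (if a i = 0 then 0 else a i))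
          - (∑ i ∈ s, (if a i = 0 then 0 else b i)) * (A / B) := by
      rw [Finset.sum_congr rfl e1', Finset.sum_sub_distrib, ← Finset.sum_mul]
    have e2 : ∑ i ∈ s, (if a i = 0 then 0 else a i) = A := by
      rw [hAdef]; apply Finset.sum_congr rfl; intro i hi; split_ifs with h <;> simp [h]
    have e3 : ∑ i ∈ s, (if a i = 0 then 0 else b i) ≤ B := by
      rw [hBdef]; apply Finset.sum_le_sum; intro i hi; split_ifs with h
      · exact hb i hi
      · exact le_refl _
    have hABnn : 0 ≤ A / B := by positivity
    have hmul : (∑ i ∈ s, (if a i = 0 then 0 else b i)) * (A / B) ≤ B * (A / B) :=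
      mul_le_mul_of_nonneg_right e3 hABnn
    have hBA : B * (A / B) = A := by field_simp
    rw [e1, e2]
    linarith
  rw [h1] at hsum
  linarith

lemma klTerm_sum_le {ι : Type*} (s : Finset ι) (a b : ι → ℝ)
    (ha : ∀ i ∈ s, 0 ≤ a i) (hb : ∀ i ∈ s, 0 ≤ b i) :
    klTerm (∑ i ∈ s, a i) (∑ i ∈ s, b i) ≤ ∑ i ∈ s, klTerm (a i) (b i) := by
  classical
  by_cases hA : (∑ i ∈ s, a i) = 0
  · have hz : ∀ i ∈ s, a i = 0 := (Finset.sum_eq_zero_iff_of_nonneg ha).mp hA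
    have hr : ∑ i ∈ s, klTerm (a i) (b i) = 0 :=
      Finset.sum_eq_zero fun i hi => by unfold klTerm; rw [if_pos (hz i hi)]
    rw [hA, hr]; unfold klTerm; simp
  · by_cases htop : ∃ i ∈ s, a i ≠ 0 ∧ b i = 0
    · obtain ⟨i, hi, hai, hbi⟩ := htop
      have hr : ∑ i ∈ s, klTerm (a i) (b i) = ⊤ := by
        rw [← Finset.add_sum_erase s _ hi]
        have ht : klTerm (a i) (b i) = ⊤ := by unfold klTerm; rw [if_neg hai, if_pos hbi]
        rw [ht, EReal.top_add_of_ne_bot (sum_klTerm_ne_bot _ _ _)]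
      rw [hr]; exact le_top
    · push_neg at htop
      have hab : ∀ i ∈ s, a i ≠ 0 → 0 < b i := fun i hi h =>
        lt_of_le_of_ne (hb i hi) (Ne.symm (htop i hi h))
      have hreal := real_logsum s a b ha hb hab hA
      have hrhs : ∑ i ∈ s, klTerm (a i) (b i) =
          ((∑ i ∈ s, (if a i = 0 then 0 else a i * Real.log (a i / b i)) : ℝ) : EReal) := by
        rw [ereal_coe_sum]
        apply Finset.sum_congr rfl
        intro i hi
        unfold klTerm
        by_cases h : a i = 0
        · simp [h]
        · rw [if_neg h, if_neg (ne_of_gt (hab i hi h)), if_neg h]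
      have hB : ∑ i ∈ s, b i ≠ 0 := by
        obtain ⟨i0, hi0, hai0⟩ : ∃ i ∈ s, a i ≠ 0 := by
          by_contra h; push_neg at h; exact hA (Finset.sum_eq_zero h)
        exact ne_of_gt (Finset.sum_pos' hb ⟨i0, hi0, hab i0 hi0 hai0⟩)
      have hlhs : klTerm (∑ i ∈ s, a i) (∑ i ∈ s, b i) =
          (((∑ i ∈ s, a i) * Real.log ((∑ i ∈ s, a i) / (∑ i ∈ s, b i)) : ℝ) : EReal) := by
        unfold klTerm; rw [if_neg hA, if_neg hB]
      rw [hlhs, hrhs]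
      exact_mod_cast hreal

/-- the off-mode mass `1 - μ x*` is bounded by
`sup {λ ∈ [0,1] : d_kl(λ‖q) ≤ D_KL(μ‖p)}`, and `q := 1 - p x*` itself belongs to
this set since `d_kl(q‖q) = 0`. -/
theorem off_mode_mass_bound {V : Type*} [Fintype V] [Nonempty V]
    (μ p : V → ℝ)
    (hμ0 : ∀ x, 0 ≤ μ x) (hμ1 : ∀ x, μ x ≤ 1) (hμsum : ∑ x, μ x = 1)
    (hp0 : ∀ x, 0 ≤ p x) (hp1 : ∀ x, p x ≤ 1) (hpsum : ∑ x, p x = 1)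
    (xstar : V) (hxstar : ∀ x, p x ≤ p xstar) :
    (1 - μ xstar ≤
      sSup {l : ℝ | l ∈ Set.Icc (0 : ℝ) 1 ∧ dkl l (1 - p xstar) ≤ DKL μ p}) ∧
    ((1 - p xstar) ∈
      {l : ℝ | l ∈ Set.Icc (0 : ℝ) 1 ∧ dkl l (1 - p xstar) ≤ DKL μ p}) ∧
    dkl (1 - p xstar) (1 - p xstar) = 0 := by
  classical
  have hDKL : (0 : EReal) ≤ DKL μ p := by
    have h := klTerm_sum_le Finset.univ μ p (fun i _ => hμ0 i) (fun i _ => hp0 i)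
    rw [hμsum, hpsum, klTerm_self] at h
    exact h
  have hdklqq : dkl (1 - p xstar) (1 - p xstar) = 0 := by
    unfold dkl; rw [klTerm_self, klTerm_self]; simp
  have hmemq : (1 - p xstar) ∈
      {l : ℝ | l ∈ Set.Icc (0 : ℝ) 1 ∧ dkl l (1 - p xstar) ≤ DKL μ p} := by
    refine ⟨⟨by linarith [hp1 xstar], by linarith [hp0 xstar]⟩, ?_⟩
    rw [hdklqq]; exact hDKL
  have hsa : ∑ x ∈ Finset.univ.erase xstar, μ x = 1 - μ xstar := by
    rw [Finset.sum_erase_eq_sub (Finset.mem_univ xstar), hμsum]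
  have hsp : ∑ x ∈ Finset.univ.erase xstar, p x = 1 - p xstar := by
    rw [Finset.sum_erase_eq_sub (Finset.mem_univ xstar), hpsum]
  have hkey := klTerm_sum_le (Finset.univ.erase xstar) μ p
    (fun i _ => hμ0 i) (fun i _ => hp0 i)
  rw [hsa, hsp] at hkey
  have hdkl : dkl (1 - μ xstar) (1 - p xstar) ≤ DKL μ p := by
    unfold dkl DKL
    have h1 : (1 : ℝ) - (1 - μ xstar) = μ xstar := by ring
    have h2 : (1 : ℝ) - (1 - p xstar) = p xstar := by ring
    rw [h1, h2]
    calc klTerm (1 - μ xstar) (1 - p xstar) + klTerm (μ xstar) (p xstar)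
        ≤ (∑ x ∈ Finset.univ.erase xstar, klTerm (μ x) (p x)) + klTerm (μ xstar) (p xstar) :=
          add_le_add_left hkey _
      _ = ∑ x, klTerm (μ x) (p x) := by
          rw [add_comm]
          exact Finset.add_sum_erase _ (fun x => klTerm (μ x) (p x)) (Finset.mem_univ xstar)
  refine ⟨?_, hmemq, hdklqq⟩
  apply le_csSup ⟨1, fun y hy => hy.1.2⟩
  exact ⟨⟨by linarith [hμ1 xstar], by linarith [hμ0 xstar]⟩, hdkl⟩
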